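/- Let N ≥ 2, α ∈ (0,1), and let q : ZMod N → ℤ. If q_i − q_{i+1} ≥ 2 at edge i, then for every dither value v ∈ (−1/2, 1/2) the D³sync update at edge i with dither v satisfies q'_i ≤ q_i and q'_{i+1} ≥ q_{i+1}; symmetrically, if q_{i+1} − q_i ≥ 2, then q'_i ≥ q_i and q'_{i+1} ≤ q_{i+1}. -/

import Mathlib

open MeasureTheory

/-- Nearest-integer rounding: `round y = ⌊y + 1/2⌋`. -/
noncomputable def nround (y : ℝ) : ℤ := ⌊y + 1/2⌋

/-- The D³sync update at edge `i` of the cyclic vector `q` with dither `v`: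
`q'_i = q_{i+1} + round((1+α)/2 · (q_i − q_{i+1}) + v)`,
`q'_{i+1} = q_i + q_{i+1} − q'_i`, and `q'_j = q_j` elsewhere. -/
noncomputable def d3update (N : ℕ) (α : ℝ) (q : ZMod N → ℤ) (i : ZMod N) (v : ℝ) :
    ZMod N → ℤ := fun j =>
  if j = i then
    q (i + 1) + nround ((1 + α) / 2 * ((q i : ℝ) - (q (i + 1) : ℝ)) + v)
  else if j = i + 1 then
    q i + q (i + 1) -
      (q (i + 1) + nround ((1 + α) / 2 * ((q i : ℝ) - (q (i + 1) : ℝ)) + v))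
  else q j

/-- A TDM state: all pairwise differences are at most one slot. -/
def isTDM (N : ℕ) (q : ZMod N → ℤ) : Prop := ∀ i j : ZMod N, |q i - q j| ≤ 1

/-- If the active nodes' values differ by at least two slots, the larger value does not
increase and the smaller value does not decrease under the D³sync update. -/
theorem stmt7 (N : ℕ) (hN : 2 ≤ N) (α : ℝ) (hα : α ∈ Set.Ioo (0 : ℝ) 1)
    (q : ZMod N → ℤ) (i : ZMod N) (v : ℝ)
    (hv : v ∈ Set.Ioo (-(1 : ℝ) / 2) (1 / 2)) :
    (2 ≤ q i - q (i + 1) →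
      d3update N α q i v i ≤ q i ∧ q (i + 1) ≤ d3update N α q i v (i + 1)) ∧
    (2 ≤ q (i + 1) - q i →
      q i ≤ d3update N α q i v i ∧ d3update N α q i v (i + 1) ≤ q (i + 1)) := by
  obtain ⟨hα0, hα1⟩ := hα
  obtain ⟨hv1, hv2⟩ := hv
  haveI : NeZero N := ⟨by omega⟩
  have hne : i + 1 ≠ i := by
    intro h
    have h1 : (1 : ZMod N) = 0 := by
      have := congrArg (fun x => x - i) h
      simpa using this
    haveI : Fact (1 < N) := ⟨by omega⟩
    exact one_ne_zero h1
  set d : ℤ := q i - q (i + 1) with hd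
  set r : ℤ := nround ((1 + α) / 2 * ((q i : ℝ) - (q (i + 1) : ℝ)) + v) with hr
  have hupd_i : d3update N α q i v i = q (i + 1) + r := by simp [d3update]; rfl
  have hupd_i1 : d3update N α q i v (i + 1) = q i + q (i + 1) - (q (i + 1) + r) := by
    simp [d3update, hne]; rfl
  have hcast : ((q i : ℝ) - (q (i + 1) : ℝ)) = (d : ℝ) := by push_cast [hd]; ring
  constructor
  · intro h2
    have hle : r ≤ d := by
      rw [hr, nround, hcast, Int.floor_le_iff]
      have hd2 : (2 : ℝ) ≤ (d : ℝ) := by exact_mod_cast h2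
      have h1 : (1 + α) / 2 * (d : ℝ) ≤ (d : ℝ) := by nlinarith
      nlinarith
    constructor
    · rw [hupd_i]; omega
    · rw [hupd_i1]; omega
  · intro h2
    have hge : d ≤ r := by
      rw [hr, nround, hcast, Int.le_floor]
      have hd2 : (d : ℝ) ≤ -2 := by
        have : (d : ℤ) ≤ -2 := by omega
        exact_mod_cast this
      have h1 : (d : ℝ) ≤ (1 + α) / 2 * (d : ℝ) := by nlinarith
      nlinarith
    constructor
    · rw [hupd_i]; omega
    · rw [hupd_i1]; omega
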